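/- Let Q be a prime, F_Q = ZMod Q, and ℓ, β ∈ ℕ. Let s_A ∈ F_Q and suppose ρ : Fin β → Fin ℓ → F_Q satisfies ∑ ι, ρ j ι = s_A for every j ∈ Fin β. For each j let r_{A,j} ∈ F_Q, let b_j : Fin ℓ → F_Q take only the values 0 and 1, set r_{B,j} = ∑ ι, b_j ι · 2^(ι : ℕ), define o_{j,ι} = b_j ι · (r_{A,j} · 2^(ι : ℕ)) - ρ j ι, and set s_{B,j} = ∑ ι, o_{j,ι}. Then for every j ∈ Fin β, s_A + s_{B,j} = r_{A,j} · r_{B,j}. -/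

import Mathlib

/-- Correctness of the adapted OT-based offline phase for optimized (set) OLE
tuples: Alice fixes one `s_A` and offsets `ρ j ι` with `Σ_ι ρ j ι = s_A` for
every `j`; running Gilboa's product sharing for each `j` with bits `b j` of
`r_{B,j}` and outputs `o_{j,ι} = b j ι * (r_{A,j} * 2^ι) - ρ j ι` yields
shares `s_{B,j} = Σ_ι o_{j,ι}` satisfying `s_A + s_{B,j} = r_{A,j} * r_{B,j}`
for every `j`. -/
theorem ot_set_ole_correct (Q : ℕ) [Fact Q.Prime] (ℓ β : ℕ)
    (s_A : ZMod Q) (ρ : Fin β → Fin ℓ → ZMod Q)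
    (hρ : ∀ j, ∑ ι, ρ j ι = s_A)
    (r_A : Fin β → ZMod Q)
    (b : Fin β → Fin ℓ → ZMod Q) (hb : ∀ j ι, b j ι = 0 ∨ b j ι = 1)
    (r_B : Fin β → ZMod Q) (hrB : ∀ j, r_B j = ∑ ι, b j ι * 2 ^ (ι : ℕ))
    (o : Fin β → Fin ℓ → ZMod Q)
    (ho : ∀ j ι, o j ι = b j ι * (r_A j * 2 ^ (ι : ℕ)) - ρ j ι)
    (s_B : Fin β → ZMod Q) (hsB : ∀ j, s_B j = ∑ ι, o j ι) :
    ∀ j, s_A + s_B j = r_A j * r_B j := by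
  intro j
  simp only [hsB, ho, Finset.sum_sub_distrib, hρ, hrB, Finset.mul_sum]
  ring_nf
  apply Finset.sum_congr rfl
  intro ι _
  ring
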